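/- Kernel of the linearized operator (Lemma 1.1(2)): The function g(x) = √(α(x))·Q'(x) satisfies g''(x) = (1/4 − (b(1+2b)/4)·sech²(νx))·g(x) for all x ∈ ℝ; equivalently Hg = 0, i.e. √α·∂_xQ lies in the kernel of H. -/

import Mathlib

open Real MeasureTheory Filter

noncomputable section

/-- `ν = -(b+1)/2`. -/
def nuP (b : ℝ) : ℝ := -(b + 1) / 2

/-- The lefton momentum profile `Q(x) = (A(1-b)/2) (cosh(νx))^{b/ν}`. -/
def Qp (b A : ℝ) (x : ℝ) : ℝ :=
  A * (1 - b) / 2 * Real.cosh (nuP b * x) ^ (b / nuP b)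

/-- The lefton velocity profile `q(x) = A (cosh(νx))^{-1/ν}`. -/
def qp (b A : ℝ) (x : ℝ) : ℝ := A * Real.cosh (nuP b * x) ^ (-1 / nuP b)

/-- `k = (A(1-b)/2)^{1/b+1}`. -/
def kP (b A : ℝ) : ℝ := (A * (1 - b) / 2) ^ (1 / b + 1)

/-- The weight `α(x) = Q(x)^{-1/b-2}`. -/
def alphaP (b A : ℝ) (x : ℝ) : ℝ := Qp b A x ^ (-1 / b - 2)

/-- `SQ(x) = (2k(1-b)/b) Q^{-1/b} + (2(b-1)/b) Q`. -/
def SQp (b A : ℝ) (x : ℝ) : ℝ :=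
  2 * kP b A * (1 - b) / b * Qp b A x ^ (-1 / b) + 2 * (b - 1) / b * Qp b A x

/-- The Pöschl–Teller potential `H̃₀(x) = 1/4 - (b(1+2b)/4) sech²(νx)`. -/
def Htilde0 (b : ℝ) (x : ℝ) : ℝ :=
  1 / 4 - b * (1 + 2 * b) / 4 * (1 / Real.cosh (nuP b * x)) ^ 2

/-- The Schrödinger operator `(Hg)(x) = (2k/b²)(−g'' + H̃₀ g)`. -/
def Hop (b A : ℝ) (g : ℝ → ℝ) (x : ℝ) : ℝ :=
  2 * kP b A / b ^ 2 * (-(deriv (deriv g) x) + Htilde0 b x * g x)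

/-- The linearized operator `(𝓛f)(x) = k(−((2α/b²) f')' − (2(b+1)/b) α f)`. -/
def Lop (b A : ℝ) (f : ℝ → ℝ) (x : ℝ) : ℝ :=
  kP b A * (-(deriv (fun y => 2 * alphaP b A y / b ^ 2 * deriv f y) x)
    - 2 * (b + 1) / b * alphaP b A x * f x)

/-- The integrand of the conserved functional `F₂`. -/
def F2Integrand (b : ℝ) (f : ℝ → ℝ) (x : ℝ) : ℝ :=
  f x ^ (-1 / b) * ((deriv f x) ^ 2 / (b ^ 2 * f x ^ 2) + 1)

/-- The squared weighted norm `‖f‖²_{H¹_α} = ∫ (f² + f'²) α`. -/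
def HalphaSq (b A : ℝ) (f : ℝ → ℝ) : ℝ :=
  ∫ x, (f x ^ 2 + deriv f x ^ 2) * alphaP b A x

/-- The `𝒵`-norm `‖f‖_𝒵 = ‖f‖_{H¹_α} + sup_x |f(x)|/Q(x)`. -/
def ZNorm (b A : ℝ) (f : ℝ → ℝ) : ℝ :=
  Real.sqrt (HalphaSq b A f) + ⨆ x : ℝ, |f x| / Qp b A x

/-- `m : ℝ → ℝ → ℝ` (time then space) solves the b-family equation in momentum form,
with velocity `u` satisfying `m = u - u_xx` and `m_t + u m_x + b u_x m = 0`. -/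
def IsBFamilySolution (b : ℝ) (m u : ℝ → ℝ → ℝ) : Prop :=
  (∀ t x, m t x = u t x - deriv (deriv (u t)) x) ∧
  ∀ t x, deriv (fun s => m s x) t + u t x * deriv (m t) x + b * deriv (u t) x * m t x = 0

/-- `(v, h)` solves the linearization of the b-family equation around the lefton:
`h - h_xx = v` and `v_t = ∂_x(q h_xx + (b-1) q' h_x - (b+1) q h + q'' h)`. -/
def IsLinearizedSolution (b A : ℝ) (v h : ℝ → ℝ → ℝ) : Prop :=
  (∀ t x, h t x - deriv (deriv (h t)) x = v t x) ∧
  ∀ t x, deriv (fun s => v s x) t =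
    deriv (fun y => qp b A y * deriv (deriv (h t)) y
      + (b - 1) * deriv (qp b A) y * deriv (h t) y
      - (b + 1) * qp b A y * h t y + deriv (deriv (qp b A)) y * h t y) x

/-- The quadratic form `(𝓛η, η) = (2k/b²)∫ η'² α − (2k(b+1)/b)∫ η² α`. -/
def quadFormL (b A : ℝ) (η : ℝ → ℝ) : ℝ :=
  2 * kP b A / b ^ 2 * (∫ x, deriv η x ^ 2 * alphaP b A x)
    - 2 * kP b A * (b + 1) / b * (∫ x, η x ^ 2 * alphaP b A x)

/-- The monotonicity weight `ψ_L(x) = (2/π) arctan(exp(νx/L))` with `L = 3 - b`. -/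
def psiL (b : ℝ) (x : ℝ) : ℝ :=
  2 / Real.pi * Real.arctan (Real.exp (nuP b * x / (3 - b)))


/-! ### Auxiliary lemmas for `kernel_of_H` -/

lemma hasDerivAt_cosh_rpow_aux (ν r x : ℝ) :
    HasDerivAt (fun y => Real.cosh (ν * y) ^ r)
      (r * Real.cosh (ν * x) ^ (r - 1) * (ν * Real.sinh (ν * x))) x := by
  have h1 : HasDerivAt (fun y : ℝ => ν * y) ν x := by
    simpa using (hasDerivAt_id x).const_mul ν
  have h2 : HasDerivAt (fun y => Real.cosh (ν * y)) (ν * Real.sinh (ν * x)) x := by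
    exact ((Real.hasDerivAt_cosh (ν * x)).comp x h1).congr_deriv (by ring)
  have h3 := h2.rpow_const (p := r) (Or.inl (ne_of_gt (Real.cosh_pos _)))
  convert h3 using 1
  ring

lemma hasDerivAt_sinh_comp_aux (ν x : ℝ) :
    HasDerivAt (fun y => Real.sinh (ν * y)) (ν * Real.cosh (ν * x)) x := by
  have h1 : HasDerivAt (fun y : ℝ => ν * y) ν x := by
    simpa using (hasDerivAt_id x).const_mul ν
  exact ((Real.hasDerivAt_sinh (ν * x)).comp x h1).congr_deriv (by ring)

lemma hasDerivAt_Qp_aux (b A x : ℝ) (hν : nuP b ≠ 0) :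
    HasDerivAt (Qp b A)
      (A * (1 - b) / 2 * b * Real.cosh (nuP b * x) ^ (b / nuP b - 1)
        * Real.sinh (nuP b * x)) x := by
  have h := (hasDerivAt_cosh_rpow_aux (nuP b) (b / nuP b) x).const_mul (A * (1 - b) / 2)
  refine h.congr_deriv ?_; symm
  field_simp

lemma hasDerivAt_G_aux (ν p x : ℝ) :
    HasDerivAt (fun y => Real.cosh (ν * y) ^ p * Real.sinh (ν * y))
      (ν * (p + 1) * Real.cosh (ν * x) ^ (p + 1)
        - ν * p * Real.cosh (ν * x) ^ (p - 1)) x := by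
  have h := (hasDerivAt_cosh_rpow_aux ν p x).mul (hasDerivAt_sinh_comp_aux ν x)
  refine h.congr_deriv ?_; symm
  have hc : (0:ℝ) < Real.cosh (ν * x) := Real.cosh_pos _
  have hne : Real.cosh (ν * x) ≠ 0 := ne_of_gt hc
  have hs : Real.sinh (ν * x) ^ 2 = Real.cosh (ν * x) ^ 2 - 1 := by
    have := Real.cosh_sq_sub_sinh_sq (ν * x); nlinarith
  have e1 : Real.cosh (ν * x) ^ (p + 1)
      = Real.cosh (ν * x) ^ (p - 1) * Real.cosh (ν * x) ^ 2 := by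
    rw [← Real.rpow_natCast (Real.cosh (ν*x)) 2, ← Real.rpow_add hc]
    ring_nf
  have e2 : Real.cosh (ν * x) ^ p
      = Real.cosh (ν * x) ^ (p - 1) * Real.cosh (ν * x) := by
    have h := Real.rpow_add_one hne (p - 1)
    rw [show p - 1 + 1 = p by ring] at h
    exact h
  rw [e1, e2]
  linear_combination (-(ν * p * Real.cosh (ν*x) ^ (p-1))) * hs

lemma second_deriv_G_aux {b : ℝ} (hb : b < -1) (x : ℝ) :
    deriv (deriv (fun y => Real.cosh (nuP b * y) ^ (-1 / (2 * nuP b) - 1)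
        * Real.sinh (nuP b * y))) x
      = (1 / 4 - b * (1 + 2 * b) / 4 * (1 / Real.cosh (nuP b * x)) ^ 2)
        * (Real.cosh (nuP b * x) ^ (-1 / (2 * nuP b) - 1) * Real.sinh (nuP b * x)) := by
  set ν := nuP b with hν
  have hb0 : b + 1 ≠ 0 := by linarith
  have hν2 : 2 * ν = -(b + 1) := by rw [hν]; unfold nuP; ring
  have hν0 : 0 < ν := by rw [hν]; unfold nuP; linarith
  have hνne : ν ≠ 0 := ne_of_gt hν0
  set p : ℝ := -1 / (2 * ν) - 1 with hp
  have hd1 : deriv (fun y => Real.cosh (ν * y) ^ p * Real.sinh (ν * y))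
      = fun y => ν * (p + 1) * Real.cosh (ν * y) ^ (p + 1)
        - ν * p * Real.cosh (ν * y) ^ (p - 1) := by
    funext y; exact (hasDerivAt_G_aux ν p y).deriv
  rw [hd1]
  have hd2 : HasDerivAt (fun y => ν * (p + 1) * Real.cosh (ν * y) ^ (p + 1)
        - ν * p * Real.cosh (ν * y) ^ (p - 1))
      (ν * (p + 1) * ((p + 1) * Real.cosh (ν * x) ^ (p + 1 - 1) * (ν * Real.sinh (ν * x)))
        - ν * p * ((p - 1) * Real.cosh (ν * x) ^ (p - 1 - 1) * (ν * Real.sinh (ν * x)))) x :=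
    ((hasDerivAt_cosh_rpow_aux ν (p+1) x).const_mul _).sub
      ((hasDerivAt_cosh_rpow_aux ν (p-1) x).const_mul _)
  rw [hd2.deriv]
  have hc : (0:ℝ) < Real.cosh (ν * x) := Real.cosh_pos _
  have e1 : Real.cosh (ν * x) ^ (p + 1 - 1) = Real.cosh (ν * x) ^ p := by ring_nf
  have e2 : Real.cosh (ν * x) ^ (p - 1 - 1)
      = Real.cosh (ν * x) ^ p / Real.cosh (ν * x) ^ 2 := by
    rw [← Real.rpow_natCast (Real.cosh (ν*x)) 2, ← Real.rpow_sub hc]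
    ring_nf
  rw [e1, e2]
  have hb0' : (-1:ℝ) + -b ≠ 0 := fun h => hb0 (by linarith)
  have hpv : p = 1 / (b + 1) - 1 := by
    rw [hp, hν2]; field_simp [hb0']
  have h1 : ν ^ 2 * (p + 1) ^ 2 = 1 / 4 := by
    have hv : ν * (p + 1) = -1 / 2 := by
      rw [hpv]
      have : ν = -(b+1)/2 := by linarith [hν2]
      rw [this]; field_simp; ring
    nlinarith
  have h2 : ν ^ 2 * (p * (p - 1)) = b * (1 + 2 * b) / 4 := by
    have hv : ν = -(b+1)/2 := by linarith [hν2]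
    have hb1 : ν * p = b / 2 := by rw [hpv, hv]; field_simp; ring
    have hb2 : ν * (p - 1) = (2 * b + 1) / 2 := by rw [hpv, hv]; field_simp; ring
    nlinarith
  linear_combination (Real.cosh (ν*x) ^ p * Real.sinh (ν*x)) * h1
    - (Real.cosh (ν*x) ^ p * Real.sinh (ν*x) / Real.cosh (ν*x) ^ 2) * h2

lemma g_eq_aux (b A : ℝ) (hb : b < -1) (hA : 0 < A) :
    (fun y => Real.sqrt (alphaP b A y) * deriv (Qp b A) y)
      = fun y => ((A * (1 - b) / 2) ^ ((-1 / b - 2) / 2) * (A * (1 - b) / 2 * b)) *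
          (Real.cosh (nuP b * y) ^ (-1 / (2 * nuP b) - 1) * Real.sinh (nuP b * y)) := by
  funext y
  set ν := nuP b with hν
  have hν0 : 0 < ν := by rw [hν]; unfold nuP; linarith
  have hνne : ν ≠ 0 := ne_of_gt hν0
  have hb0 : b ≠ 0 := by linarith
  have hC : (0:ℝ) < A * (1 - b) / 2 := by
    have : (0:ℝ) < 1 - b := by linarith
    positivity
  have hc : (0:ℝ) < Real.cosh (ν * y) := Real.cosh_pos _
  have hQd : deriv (Qp b A) y
      = A * (1 - b) / 2 * b * Real.cosh (ν * y) ^ (b / ν - 1) * Real.sinh (ν * y) :=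
    (hasDerivAt_Qp_aux b A y hνne).deriv
  have hα : alphaP b A y
      = (A * (1 - b) / 2) ^ (-1 / b - 2)
        * Real.cosh (ν * y) ^ (b / ν * (-1 / b - 2)) := by
    unfold alphaP Qp
    rw [Real.mul_rpow hC.le (Real.rpow_nonneg hc.le _), ← Real.rpow_mul hc.le]
  have hsq : Real.sqrt (alphaP b A y)
      = (A * (1 - b) / 2) ^ ((-1 / b - 2) / 2)
        * Real.cosh (ν * y) ^ (b / ν * (-1 / b - 2) / 2) := by
    rw [hα, Real.sqrt_mul (Real.rpow_nonneg hC.le _), Real.sqrt_eq_rpow,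
      Real.sqrt_eq_rpow, ← Real.rpow_mul hC.le, ← Real.rpow_mul hc.le]
    rw [show (-1 / b - 2) * (1 / 2) = (-1 / b - 2) / 2 by ring,
      show b / ν * (-1 / b - 2) * (1 / 2) = b / ν * (-1 / b - 2) / 2 by ring]
  rw [hsq, hQd]
  have hadd : Real.cosh (ν * y) ^ (b / ν * (-1 / b - 2) / 2)
      * Real.cosh (ν * y) ^ (b / ν - 1)
      = Real.cosh (ν * y) ^ (-1 / (2 * ν) - 1) := by
    rw [← Real.rpow_add hc]
    congr 1
    field_simp
    ring
  linear_combination ((A * (1 - b) / 2) ^ ((-1 / b - 2) / 2) * (A * (1 - b) / 2) * b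
    * Real.sinh (ν * y)) * hadd

lemma second_deriv_KG_aux {b : ℝ} (hb : b < -1) (K x : ℝ) :
    deriv (deriv (fun y => K * (Real.cosh (nuP b * y) ^ (-1 / (2 * nuP b) - 1)
        * Real.sinh (nuP b * y)))) x
      = (1 / 4 - b * (1 + 2 * b) / 4 * (1 / Real.cosh (nuP b * x)) ^ 2)
        * (K * (Real.cosh (nuP b * x) ^ (-1 / (2 * nuP b) - 1)
            * Real.sinh (nuP b * x))) := by
  have hd1 : deriv (fun y => K * (Real.cosh (nuP b * y) ^ (-1 / (2 * nuP b) - 1)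
        * Real.sinh (nuP b * y)))
      = fun z => K * deriv (fun y => Real.cosh (nuP b * y) ^ (-1 / (2 * nuP b) - 1)
        * Real.sinh (nuP b * y)) z := by
    funext z; exact deriv_const_mul_field K
  rw [hd1, deriv_const_mul_field K, second_deriv_G_aux hb x]
  ring

/-- **Kernel of the linearized operator** (Lemma 1.1(2)): `g = √α · Q'` satisfies
`g'' = H̃₀ g`, i.e. `Hg = 0`. -/
theorem kernel_of_H (b A : ℝ) (hb : b < -1) (hA : 0 < A) :
    (∀ x : ℝ,
      deriv (deriv (fun y => Real.sqrt (alphaP b A y) * deriv (Qp b A) y)) x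
        = Htilde0 b x * (Real.sqrt (alphaP b A x) * deriv (Qp b A) x)) ∧
    ∀ x : ℝ, Hop b A (fun y => Real.sqrt (alphaP b A y) * deriv (Qp b A) y) x = 0 := by
  have key : ∀ x : ℝ,
      deriv (deriv (fun y => Real.sqrt (alphaP b A y) * deriv (Qp b A) y)) x
        = Htilde0 b x * (Real.sqrt (alphaP b A x) * deriv (Qp b A) x) := by
    intro x
    have hgx := congrFun (g_eq_aux b A hb hA) x
    rw [g_eq_aux b A hb hA, hgx]
    unfold Htilde0
    exact second_deriv_KG_aux hb _ x
  refine ⟨key, fun x => ?_⟩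
  unfold Hop
  rw [key x]
  ring
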